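/- The following two conditions are equivalent: (i) there exists a class 𝒦 function β : [0,∞) → [0,∞) such that β(A⋆(s,a)) ≥ Â(s,a) for all (s,a) ∈ S × A; (ii) for every s ∈ S, the set {a ∈ A : A⋆(s,a) = 0} is contained in {a ∈ A : Â(s,a) = 0}, i.e., argmin_a A⋆(s,a) ⊆ argmin_a Â(s,a) for every s. (Lemma 2.) -/

import Mathlib

/-- A class `𝒦` function `[0,∞) → [0,∞)`: vanishes at `0` and is strictly
increasing on `[0,∞)` (nonnegativity on `[0,∞)` then follows). -/
def IsClassK (α : ℝ → ℝ) : Prop :=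
  α 0 = 0 ∧ StrictMonoOn α (Set.Ici 0)

/-- Lemma 2: there exists a class `𝒦` function `β` with
`β(A⋆(s,a)) ≥ Â(s,a)` for all `(s,a)` iff for every `s` the zeros (minimizers)
of `A⋆(s,·)` are contained in the zeros (minimizers) of `Â(s,·)`. -/
theorem stmt_6 {S A : Type*} [TopologicalSpace S] [TopologicalSpace A]
    [CompactSpace S] [CompactSpace A] [Nonempty S] [Nonempty A]
    (Astar Ahat : S × A → ℝ)
    (hAstar_cont : Continuous Astar) (hAhat_cont : Continuous Ahat)
    (hAstar_nonneg : ∀ p : S × A, 0 ≤ Astar p)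
    (hAhat_nonneg : ∀ p : S × A, 0 ≤ Ahat p)
    (hAstar_zero : ∀ s : S, ∃ a : A, Astar (s, a) = 0)
    (hAhat_zero : ∀ s : S, ∃ a : A, Ahat (s, a) = 0) :
    (∃ β : ℝ → ℝ, IsClassK β ∧ ∀ p : S × A, Ahat p ≤ β (Astar p)) ↔
      (∀ s : S, {a : A | Astar (s, a) = 0} ⊆ {a : A | Ahat (s, a) = 0}) := by
  constructor
  · rintro ⟨β, ⟨hβ0, _⟩, hβ⟩ s a (ha : Astar (s, a) = 0)
    have h1 := hβ (s, a)
    rw [ha, hβ0] at h1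
    exact le_antisymm h1 (hAhat_nonneg (s, a))
  · intro h
    -- bound on Ahat
    obtain ⟨p0, -, hp0⟩ := isCompact_univ.exists_isMaxOn Set.univ_nonempty
      hAhat_cont.continuousOn
    set M := Ahat p0 with hM
    have hbdd : ∀ r : ℝ, BddAbove (Ahat '' {p : S × A | Astar p ≤ r}) := by
      intro r
      exact ⟨M, by rintro x ⟨p, -, rfl⟩; exact hp0 (Set.mem_univ p)⟩
    set g : ℝ → ℝ := fun r => sSup (Ahat '' {p : S × A | Astar p ≤ r}) with hg
    -- a zero point
    obtain ⟨a0, ha0⟩ := hAstar_zero (Classical.arbitrary S)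
    have hne : ∀ r : ℝ, 0 ≤ r → (Ahat '' {p : S × A | Astar p ≤ r}).Nonempty := by
      intro r hr
      exact ⟨Ahat (Classical.arbitrary S, a0), ⟨(Classical.arbitrary S, a0),
        by simpa [ha0] using hr, rfl⟩⟩
    have hg0 : g 0 = 0 := by
      apply le_antisymm
      · apply Real.sSup_le _ le_rfl
        rintro x ⟨p, hp, rfl⟩
        have hz : Astar (p.1, p.2) = 0 := le_antisymm hp (hAstar_nonneg p)
        exact le_of_eq (h p.1 hz)
      · refine le_csSup (hbdd 0) ?_
        exact ⟨(Classical.arbitrary S, a0), by simp [ha0], h _ ha0⟩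
    have hgmono : ∀ x y : ℝ, 0 ≤ x → x ≤ y → g x ≤ g y := by
      intro x y hx hxy
      exact csSup_le_csSup (hbdd y) (hne x hx)
        (Set.image_mono fun p hp => le_trans hp hxy)
    refine ⟨fun r => g r + r, ⟨by simp [hg0], ?_⟩, ?_⟩
    · intro x hx y _ hxy
      exact add_lt_add_of_le_of_lt (hgmono x y hx hxy.le) hxy
    · intro p
      have h1 : Ahat p ≤ g (Astar p) :=
        le_csSup (hbdd (Astar p)) ⟨p, Set.mem_setOf.mpr le_rfl, rfl⟩
      simp only []
      linarith [hAstar_nonneg p]
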